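/- Suppose Σ ∈ P(X) is an irreducible collection of partial splits of X and C is an X-cycle. Then Σ is displayed by C if and only if the split closure ⟨Σ⟩_{θ_{M/Y}} of Σ with respect to the combined M/Y-rule is displayed by C. In that case the split closures ⟨Σ⟩_{θ_Y} and ⟨Σ⟩_{θ_M} are also displayed by C. -/

import Mathlib

/-!
Common definitions: partial splits of a finite set `X`, modelled as unordered
pairs (`Sym2`) of nonempty disjoint subsets of `X`; the `M`-, `Y`- and `Z`-
closure rules; weak compatibility; `X`-cycles and display; split closure
sequences and split closures.
-/

variable {X : Type*}

/-- `S` is a partial split of `X`: an unordered pair of nonempty disjoint subsets of `X`. -/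
def IsPartialSplit (S : Sym2 (Set X)) : Prop :=
  ∃ A B : Set X, S = s(A, B) ∧ A.Nonempty ∧ B.Nonempty ∧ Disjoint A B

/-- `S` is a full split of `X`: a partial split whose two parts cover `X`. -/
def IsFullSplit (S : Sym2 (Set X)) : Prop :=
  ∃ A B : Set X, S = s(A, B) ∧ A.Nonempty ∧ B.Nonempty ∧ Disjoint A B ∧ A ∪ B = Set.univ

/-- The partial split `S` extends the partial split `T`. -/
def SplitExtends (S T : Sym2 (Set X)) : Prop :=
  ∃ A B C D : Set X, S = s(A, B) ∧ T = s(C, D) ∧ C ⊆ A ∧ D ⊆ B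

/-- `Sig ⪯ Sig'`: every partial split of `Sig` is extended by one of `Sig'`. -/
def Preceq (Sig Sig' : Set (Sym2 (Set X))) : Prop :=
  ∀ S ∈ Sig, ∃ T ∈ Sig', SplitExtends T S

/-- `Sig⁻`: the set obtained from `Sig` by removing all redundant partial splits,
i.e. those extended by a different element of `Sig`. -/
def sreduce (Sig : Set (Sym2 (Set X))) : Set (Sym2 (Set X)) :=
  {S | S ∈ Sig ∧ ¬ ∃ T ∈ Sig, T ≠ S ∧ SplitExtends T S}

/-- `Sig ∈ P(X)`: `Sig` is an irreducible collection of partial splits of `X`. -/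
def InPX (Sig : Set (Sym2 (Set X))) : Prop :=
  (∀ S ∈ Sig, IsPartialSplit S) ∧ sreduce Sig = Sig

/-- Two partial splits are compatible if some part of one is disjoint from some part
of the other. -/
def SplitCompatible (S T : Sym2 (Set X)) : Prop :=
  ∃ A B C D : Set X, S = s(A, B) ∧ T = s(C, D) ∧ A ∩ C = ∅

/-- Weak compatibility of a (multi)triple of partial splits: for every choice of parts,
one of the four distinguished triple intersections is empty. -/
def WeaklyCompatTriple (S1 S2 S3 : Sym2 (Set X)) : Prop :=
  ∀ A1 B1 A2 B2 A3 B3 : Set X,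
    S1 = s(A1, B1) → S2 = s(A2, B2) → S3 = s(A3, B3) →
    A1 ∩ A2 ∩ A3 = ∅ ∨ B1 ∩ B2 ∩ A3 = ∅ ∨ B1 ∩ A2 ∩ B3 = ∅ ∨ A1 ∩ B2 ∩ B3 = ∅

/-- A collection of partial splits is weakly compatible if every three of its members are. -/
def WeaklyCompatible (Sig : Set (Sym2 (Set X))) : Prop :=
  ∀ S1 ∈ Sig, ∀ S2 ∈ Sig, ∀ S3 ∈ Sig, WeaklyCompatTriple S1 S2 S3

/-- Condition of the `M`-rule for the parts `A1|B1`, `A2|B2`. -/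
def mCond (A1 B1 A2 B2 : Set X) : Prop :=
  (A1 ∩ A2).Nonempty ∧ (B1 ∩ B2).Nonempty

/-- Output of the `M`-rule applied with respect to the parts `A1|B1`, `A2|B2`. -/
def mOut (A1 B1 A2 B2 : Set X) : Set (Sym2 (Set X)) :=
  {s(A1, B1), s(A2, B2), s(A1 ∩ A2, B1 ∪ B2), s(B1 ∩ B2, A1 ∪ A2)}

/-- Condition of the `Y`-rule for the parts `A1|B1`, `A2|B2`, `A3|B3`. -/
def yCond (A1 B1 A2 B2 A3 B3 : Set X) : Prop :=
  (A1 ∩ A2 ∩ A3).Nonempty ∧ (B1 ∩ B2 ∩ A3).Nonempty ∧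
    (B1 ∩ A2 ∩ B3).Nonempty ∧ A1 ∩ B2 ∩ B3 = ∅

/-- Output of the `Y`-rule applied with respect to the parts `A1|B1`, `A2|B2`, `A3|B3`. -/
def yOut (A1 B1 A2 B2 A3 B3 : Set X) : Set (Sym2 (Set X)) :=
  {s(B1 ∪ (B2 ∩ B3), A1), s(A2 ∪ (A1 ∩ B3), B2), s(A3 ∪ (A1 ∩ B2), B3)}

/-- Condition of the `Z`-rule for the parts `A1|B1`, `A2|B2`. -/
def zCond (A1 B1 A2 B2 : Set X) : Prop :=
  (A1 ∩ A2).Nonempty ∧ (A2 ∩ B1).Nonempty ∧ (B1 ∩ B2).Nonempty ∧ A1 ∩ B2 = ∅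

/-- Output of the `Z`-rule applied with respect to the parts `A1|B1`, `A2|B2`. -/
def zOut (A1 B1 A2 B2 : Set X) : Set (Sym2 (Set X)) :=
  {s(B1 ∪ B2, A1), s(B2, A1 ∪ A2)}

/-- `Sig'` is obtained from `Sig` by a single application of the `Y`-rule. -/
def yStep (Sig Sig' : Set (Sym2 (Set X))) : Prop :=
  ∃ A1 B1 A2 B2 A3 B3 : Set X,
    s(A1, B1) ∈ Sig ∧ s(A2, B2) ∈ Sig ∧ s(A3, B3) ∈ Sig ∧
    s(A1, B1) ≠ s(A2, B2) ∧ s(A1, B1) ≠ s(A3, B3) ∧ s(A2, B2) ≠ s(A3, B3) ∧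
    yCond A1 B1 A2 B2 A3 B3 ∧
    Sig' = sreduce (Sig ∪ yOut A1 B1 A2 B2 A3 B3)

/-- `Sig'` is obtained from `Sig` by a single application of the `M`-rule. -/
def mStep (Sig Sig' : Set (Sym2 (Set X))) : Prop :=
  ∃ A1 B1 A2 B2 : Set X,
    s(A1, B1) ∈ Sig ∧ s(A2, B2) ∈ Sig ∧ s(A1, B1) ≠ s(A2, B2) ∧
    mCond A1 B1 A2 B2 ∧
    Sig' = sreduce (Sig ∪ mOut A1 B1 A2 B2)

/-- `Sig'` is obtained from `Sig` by a single non-trivial application of the `Y`-rule. -/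
def yStepNT (Sig Sig' : Set (Sym2 (Set X))) : Prop :=
  ∃ A1 B1 A2 B2 A3 B3 : Set X,
    s(A1, B1) ∈ Sig ∧ s(A2, B2) ∈ Sig ∧ s(A3, B3) ∈ Sig ∧
    s(A1, B1) ≠ s(A2, B2) ∧ s(A1, B1) ≠ s(A3, B3) ∧ s(A2, B2) ≠ s(A3, B3) ∧
    yCond A1 B1 A2 B2 A3 B3 ∧
    ¬ Preceq (sreduce (yOut A1 B1 A2 B2 A3 B3)) Sig ∧
    Sig' = sreduce (Sig ∪ yOut A1 B1 A2 B2 A3 B3)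

/-- `Sig'` is obtained from `Sig` by a single non-trivial application of the `M`-rule. -/
def mStepNT (Sig Sig' : Set (Sym2 (Set X))) : Prop :=
  ∃ A1 B1 A2 B2 : Set X,
    s(A1, B1) ∈ Sig ∧ s(A2, B2) ∈ Sig ∧ s(A1, B1) ≠ s(A2, B2) ∧
    mCond A1 B1 A2 B2 ∧
    ¬ Preceq (sreduce (mOut A1 B1 A2 B2)) Sig ∧
    Sig' = sreduce (Sig ∪ mOut A1 B1 A2 B2)

/-- `Sig` is closed under the `Y`-rule: every application of the `Y`-rule to `Sig` is trivial. -/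
def yClosed (Sig : Set (Sym2 (Set X))) : Prop :=
  ∀ A1 B1 A2 B2 A3 B3 : Set X,
    s(A1, B1) ∈ Sig → s(A2, B2) ∈ Sig → s(A3, B3) ∈ Sig →
    s(A1, B1) ≠ s(A2, B2) → s(A1, B1) ≠ s(A3, B3) → s(A2, B2) ≠ s(A3, B3) →
    yCond A1 B1 A2 B2 A3 B3 →
    Preceq (sreduce (yOut A1 B1 A2 B2 A3 B3)) Sig

/-- `Sig` is closed under the `M`-rule: every application of the `M`-rule to `Sig` is trivial. -/
def mClosed (Sig : Set (Sym2 (Set X))) : Prop :=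
  ∀ A1 B1 A2 B2 : Set X,
    s(A1, B1) ∈ Sig → s(A2, B2) ∈ Sig → s(A1, B1) ≠ s(A2, B2) →
    mCond A1 B1 A2 B2 →
    Preceq (sreduce (mOut A1 B1 A2 B2)) Sig

/-- A split closure sequence for `Sig` of length `n` with respect to the property `P` and
the non-trivial single-application relation `stepNT`: a strictly `⪯`-increasing sequence
in `P(X)` starting at `Sig` in which every term satisfying `P` is followed by the result
of one non-trivial application of the rule. -/
def IsClosureSeq (P : Set (Sym2 (Set X)) → Prop)
    (stepNT : Set (Sym2 (Set X)) → Set (Sym2 (Set X)) → Prop)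
    (Sig : Set (Sym2 (Set X))) (n : ℕ) (f : ℕ → Set (Sym2 (Set X))) : Prop :=
  f 0 = Sig ∧ (∀ i ≤ n, InPX (f i)) ∧
    (∀ i < n, P (f i) ∧ stepNT (f i) (f (i + 1)) ∧
      Preceq (f i) (f (i + 1)) ∧ f i ≠ f (i + 1))

/-- `cl` is a split closure of `Sig` (with `cl = none` playing the role of `ω`):
the last element of a split closure sequence for `Sig`, which either satisfies `P` and is
closed under the rule, or fails `P`, in which case it is replaced by `ω`. -/
def IsSplitClosure (P : Set (Sym2 (Set X)) → Prop)
    (stepNT : Set (Sym2 (Set X)) → Set (Sym2 (Set X)) → Prop)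
    (closed : Set (Sym2 (Set X)) → Prop)
    (Sig : Set (Sym2 (Set X))) (cl : Option (Set (Sym2 (Set X)))) : Prop :=
  ∃ (n : ℕ) (f : ℕ → Set (Sym2 (Set X))),
    IsClosureSeq P stepNT Sig n f ∧
    ((P (f n) ∧ closed (f n) ∧ cl = some (f n)) ∨ (¬ P (f n) ∧ cl = none))

/-- Split closure with respect to the `Y`-rule, `(P)` being weak compatibility. -/
def IsYClosure (Sig : Set (Sym2 (Set X))) (cl : Option (Set (Sym2 (Set X)))) : Prop :=
  IsSplitClosure WeaklyCompatible yStepNT yClosed Sig cl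

/-- Split closure with respect to the `M`-rule, `(P)` holding for all collections. -/
def IsMClosure (Sig : Set (Sym2 (Set X))) (cl : Option (Set (Sym2 (Set X)))) : Prop :=
  IsSplitClosure (fun _ => True) mStepNT mClosed Sig cl

/-- Split closure with respect to the combined `M/Y`-rule, `(P)` being weak compatibility. -/
def IsMYClosure (Sig : Set (Sym2 (Set X))) (cl : Option (Set (Sym2 (Set X)))) : Prop :=
  IsSplitClosure WeaklyCompatible
    (fun s s' => mStepNT s s' ∨ yStepNT s s') (fun s => mClosed s ∧ yClosed s) Sig cl

/-- `C` is an `X`-cycle: a connected graph on the vertex set `X` (`|X| ≥ 3`) in which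
every vertex has degree `2`. -/
def IsXCycle (C : SimpleGraph X) : Prop :=
  C.Connected ∧ 3 ≤ Nat.card X ∧ ∀ v : X, (C.neighborSet v).ncard = 2

/-- The partial split `S` is displayed by the `X`-cycle `C`: there are two distinct
edges of `C` whose deletion leaves one component containing one part of `S` and
another component containing the other part. -/
def DisplaysSplit (C : SimpleGraph X) (S : Sym2 (Set X)) : Prop :=
  ∃ A B : Set X, S = s(A, B) ∧
    ∃ e1 e2 : Sym2 X, e1 ∈ C.edgeSet ∧ e2 ∈ C.edgeSet ∧ e1 ≠ e2 ∧
      ∃ c1 c2 : (C.deleteEdges {e1, e2}).ConnectedComponent,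
        c1 ≠ c2 ∧ A ⊆ c1.supp ∧ B ⊆ c2.supp

/-- A collection of partial splits is displayed by `C` if each of its members is. -/
def DisplaysColl (C : SimpleGraph X) (Sig : Set (Sym2 (Set X))) : Prop :=
  ∀ S ∈ Sig, DisplaysSplit C S

/-- `cl ≠ ω` and the underlying collection is displayed by `C`. -/
def OptionDisplays (C : SimpleGraph X) (cl : Option (Set (Sym2 (Set X)))) : Prop :=
  ∃ Sig, cl = some Sig ∧ DisplaysColl C Sig

/-- The ground set `A ∪ B` of a partial split `A|B`. -/
def splitGround (S : Sym2 (Set X)) : Set X :=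
  ⋃₀ {A : Set X | A ∈ S}

/-- Membership in `P_ω(X) = P(X) ∪ {ω}`. -/
def InPOmega (x : Option (Set (Sym2 (Set X)))) : Prop :=
  x = none ∨ ∃ Sig, x = some Sig ∧ InPX Sig

/-- The order `⪯` on `P_ω(X)`, with `Sig ⪯ ω` for all `Sig` and `ω ⪯ ω`. -/
def PreceqO (x y : Option (Set (Sym2 (Set X)))) : Prop :=
  y = none ∨ ∃ Sig Sig', x = some Sig ∧ y = some Sig' ∧ Preceq Sig Sig'

/-- Split closure as a relation on `P_ω(X)`, with `⟨ω⟩ = ω`. -/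
def ClosO (cls : Set (Sym2 (Set X)) → Option (Set (Sym2 (Set X))) → Prop)
    (x y : Option (Set (Sym2 (Set X)))) : Prop :=
  (x = none ∧ y = none) ∨ ∃ Sig, x = some Sig ∧ cls Sig y


/-! ### Auxiliary development: cut-edge counting on cycles -/

open scoped Classical

namespace Statement15Aux

variable {X : Type*} [Fintype X] {C : SimpleGraph X}

/-- crossing predicate -/
def Crosses (S T : Set X) (e : Sym2 X) : Prop := ∃ u v, e = s(u, v) ∧ u ∈ S ∧ v ∈ T

noncomputable def eb (C : SimpleGraph X) (S T : Set X) : Finset (Sym2 X) :=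
  C.edgeFinset.filter (Crosses S T)

noncomputable def cutF (C : SimpleGraph X) (S : Set X) : Finset (Sym2 X) := eb C Sᶜ S

lemma mem_eb {S T : Set X} {e : Sym2 X} :
    e ∈ eb C S T ↔ e ∈ C.edgeSet ∧ Crosses S T e := by
  simp [eb, SimpleGraph.mem_edgeFinset]

lemma eb_symm (S T : Set X) : eb C S T = eb C T S := by
  apply Finset.filter_congr
  intro e _
  constructor <;> rintro ⟨u, v, rfl, hu, hv⟩ <;> exact ⟨v, u, Sym2.eq_swap, hv, hu⟩

lemma eb_mono {S T S' T' : Set X} (hS : S ⊆ S') (hT : T ⊆ T') :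
    eb C S T ⊆ eb C S' T' := by
  intro e he
  rw [mem_eb] at he ⊢
  obtain ⟨he1, u, v, rfl, hu, hv⟩ := he
  exact ⟨he1, u, v, rfl, hS hu, hT hv⟩

lemma cutF_compl (S : Set X) : cutF C Sᶜ = cutF C S := by
  rw [cutF, cutF, compl_compl, eb_symm]

lemma eb_union_right {S T T' : Set X} (hST : Disjoint S (T ∪ T')) (hTT' : Disjoint T T') :
    eb C S (T ∪ T') = eb C S T ∪ eb C S T' ∧ Disjoint (eb C S T) (eb C S T') := by
  constructor
  · ext e
    simp only [mem_eb, Finset.mem_union]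
    constructor
    · rintro ⟨he, u, v, rfl, hu, hv⟩
      rcases hv with hv | hv
      · exact Or.inl ⟨he, u, v, rfl, hu, hv⟩
      · exact Or.inr ⟨he, u, v, rfl, hu, hv⟩
    · rintro (⟨he, u, v, rfl, hu, hv⟩ | ⟨he, u, v, rfl, hu, hv⟩)
      · exact ⟨he, u, v, rfl, hu, Or.inl hv⟩
      · exact ⟨he, u, v, rfl, hu, Or.inr hv⟩
  · rw [Finset.disjoint_left]
    intro e h1 h2
    rw [mem_eb] at h1 h2
    obtain ⟨_, u, v, rfl, hu, hv⟩ := h1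
    obtain ⟨_, u', v', he, hu', hv'⟩ := h2
    rw [Sym2.eq_iff] at he
    rcases he with ⟨rfl, rfl⟩ | ⟨rfl, rfl⟩
    · exact hTT'.ne_of_mem hv hv' rfl
    · exact (hST.ne_of_mem hu (Or.inr hv')) rfl

lemma eb_card_union_right {S T T' : Set X} (hST : Disjoint S (T ∪ T')) (hTT' : Disjoint T T') :
    (eb C S (T ∪ T')).card = (eb C S T).card + (eb C S T').card := by
  obtain ⟨h1, h2⟩ := eb_union_right hST hTT'
  rw [h1, Finset.card_union_of_disjoint h2]

lemma eb_card_union_left {S S' T : Set X} (hST : Disjoint T (S ∪ S')) (hSS' : Disjoint S S') :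
    (eb C (S ∪ S') T).card = (eb C S T).card + (eb C S' T).card := by
  rw [eb_symm, eb_card_union_right hST hSS', eb_symm T S, eb_symm T S']

/-- along any walk from inside S to outside S there is a crossing adjacency -/
lemma exists_cross_adj {S : Set X} {a b : X} (w : C.Walk a b) (ha : a ∈ S) (hb : b ∉ S) :
    ∃ u v, C.Adj u v ∧ u ∈ S ∧ v ∉ S := by
  induction w with
  | nil => exact absurd ha hb
  | cons h p ih =>
    rename_i x y z
    by_cases hy : y ∈ S
    · exact ih hy hb
    · exact ⟨x, y, h, ha, hy⟩

lemma cutF_nonempty (hconn : C.Connected) {S : Set X} (hS : S.Nonempty) (hSc : Sᶜ.Nonempty) :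
    (cutF C S).Nonempty := by
  obtain ⟨a, ha⟩ := hSc
  obtain ⟨b, hb⟩ := hS
  obtain ⟨w⟩ := hconn.preconnected a b
  obtain ⟨u, v, huv, hu, hv⟩ := exists_cross_adj w ha (by simpa using hb)
  refine ⟨s(u, v), ?_⟩
  rw [cutF, mem_eb]
  exact ⟨huv, u, v, rfl, hu, by simpa using hv⟩

lemma degree_two (hdeg : ∀ v : X, (C.neighborSet v).ncard = 2) (v : X) : C.degree v = 2 := by
  rw [← SimpleGraph.card_neighborFinset_eq_degree, SimpleGraph.neighborFinset_def,
    ← Set.ncard_eq_toFinset_card']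
  exact hdeg v

lemma even_cutF (hdeg : ∀ v : X, (C.neighborSet v).ncard = 2) (S : Set X) :
    Even (cutF C S).card := by
  set SD : Finset C.Dart := Finset.univ.filter (fun d => d.fst ∈ S) with hSD
  set N1 : Finset C.Dart := SD.filter (fun d => d.snd ∈ S) with hN1
  set N2 : Finset C.Dart := SD.filter (fun d => d.snd ∉ S) with hN2
  have hsplit : N1.card + N2.card = SD.card := Finset.card_filter_add_card_filter_not _
  -- SD has even card
  have hSDcard : SD.card = ∑ v ∈ S.toFinset, C.degree v := by
    rw [Finset.card_eq_sum_card_fiberwise (f := fun d : C.Dart => d.fst)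
      (t := S.toFinset) (fun d hd => by simpa [hSD] using hd)]
    refine Finset.sum_congr rfl fun v hv => ?_
    rw [← SimpleGraph.dart_fst_fiber_card_eq_degree]
    congr 1
    ext d
    simp only [hSD, Finset.mem_filter, Finset.mem_univ, true_and]
    constructor
    · rintro ⟨_, h⟩; exact h
    · rintro rfl; exact ⟨by simpa using hv, rfl⟩
  have hSDeven : Even SD.card := by
    rw [hSDcard]
    refine Finset.even_sum _ fun v _ => ?_
    rw [degree_two hdeg]
    exact even_two
  -- N1 has even card
  have hN1even : Even N1.card := by
    rw [Finset.card_eq_sum_card_fiberwise (f := fun d : C.Dart => d.edge)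
      (t := N1.image (fun d => d.edge)) (fun d hd => Finset.mem_image_of_mem _ hd)]
    refine Finset.even_sum _ fun e he => ?_
    obtain ⟨d, hd, rfl⟩ := Finset.mem_image.mp he
    have hmem : ∀ d' : C.Dart, d' ∈ N1 ∧ d'.edge = d.edge ↔ d' = d ∨ d' = d.symm := by
      intro d'
      constructor
      · rintro ⟨_, he'⟩
        exact (SimpleGraph.dart_edge_eq_iff d' d).mp he'
      · rintro (rfl | rfl)
        · exact ⟨hd, rfl⟩
        · refine ⟨?_, d.edge_symm⟩
          have hd1 : d.fst ∈ S := by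
            have := (Finset.mem_filter.mp ((Finset.mem_filter.mp hd).1)).2
            exact this
          have hd2 : d.snd ∈ S := (Finset.mem_filter.mp hd).2
          rw [hN1, Finset.mem_filter, hSD, Finset.mem_filter]
          exact ⟨⟨Finset.mem_univ _, by simpa using hd2⟩, by simpa using hd1⟩
    have : N1.filter (fun d' => d'.edge = d.edge) = {d, d.symm} := by
      ext d'
      simp only [Finset.mem_filter, Finset.mem_insert, Finset.mem_singleton]
      exact hmem d'
    rw [this, Finset.card_pair]
    · exact even_two
    · intro h
      exact d.fst_ne_snd (by conv_lhs => rw [h, SimpleGraph.Dart.symm_toProd, Prod.fst_swap])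
  have hN2even : Even N2.card := by
    have h2 : N2.card = SD.card - N1.card := by omega
    rw [h2]
    exact hSDeven.tsub hN1even
  -- N2 is in bijection with the cut
  have hbij : N2.card = (cutF C S).card := by
    apply Finset.card_bij (fun d _ => d.edge)
    · intro d hd
      rw [Finset.mem_filter, Finset.mem_filter] at hd
      rw [cutF, mem_eb]
      refine ⟨d.edge_mem, d.snd, d.fst, ?_, by simpa using hd.2, by simpa using hd.1.2⟩
      rw [Sym2.eq_swap]
      rfl
    · intro d1 h1 d2 h2 he
      rcases (SimpleGraph.dart_edge_eq_iff d1 d2).mp he with rfl | rfl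
      · rfl
      · exfalso
        rw [Finset.mem_filter, Finset.mem_filter] at h1 h2
        exact h1.2 (by simpa using h2.1.2)
    · intro e he
      rw [cutF, mem_eb] at he
      obtain ⟨hadj, u, v, rfl, hu, hv⟩ := he
      have hadj' : C.Adj v u := ((SimpleGraph.mem_edgeSet C).mp (by rwa [Sym2.eq_swap] at hadj))
      refine ⟨SimpleGraph.Dart.mk (v, u) hadj', ?_, ?_⟩
      · rw [Finset.mem_filter, Finset.mem_filter]
        exact ⟨⟨Finset.mem_univ _, by simpa using hv⟩, by simpa using hu⟩
      · rw [Sym2.eq_swap]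
        rfl
  rw [← hbij]
  exact hN2even

lemma two_le_cutF (hconn : C.Connected) (hdeg : ∀ v : X, (C.neighborSet v).ncard = 2)
    {S : Set X} (hS : S.Nonempty) (hSc : Sᶜ.Nonempty) : 2 ≤ (cutF C S).card := by
  obtain ⟨k, hk⟩ := even_cutF hdeg S
  have h1 := Finset.card_pos.mpr (cutF_nonempty hconn hS hSc)
  omega

/-- submodularity of the cut function -/
lemma cutF_submod (S T : Set X) :
    (cutF C (S ∩ T)).card + (cutF C (S ∪ T)).card ≤ (cutF C S).card + (cutF C T).card := by
  have hsub1 : cutF C (S ∩ T) ∪ cutF C (S ∪ T) ⊆ cutF C S ∪ cutF C T := by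
    intro e he
    rw [Finset.mem_union] at he ⊢
    rcases he with he | he
    · rw [cutF, mem_eb] at he
      obtain ⟨hE, u, v, rfl, hu, hv⟩ := he
      rw [Set.mem_compl_iff, Set.mem_inter_iff, not_and_or] at hu
      rcases hu with hu | hu
      · exact Or.inl ((mem_eb).mpr ⟨hE, u, v, rfl, hu, hv.1⟩)
      · exact Or.inr ((mem_eb).mpr ⟨hE, u, v, rfl, hu, hv.2⟩)
    · rw [cutF, mem_eb] at he
      obtain ⟨hE, u, v, rfl, hu, hv⟩ := he
      rw [Set.mem_compl_iff, Set.mem_union, not_or] at hu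
      rcases hv with hv | hv
      · exact Or.inl ((mem_eb).mpr ⟨hE, u, v, rfl, hu.1, hv⟩)
      · exact Or.inr ((mem_eb).mpr ⟨hE, u, v, rfl, hu.2, hv⟩)
  have hsub2 : cutF C (S ∩ T) ∩ cutF C (S ∪ T) ⊆ cutF C S ∩ cutF C T := by
    intro e he
    rw [Finset.mem_inter] at he ⊢
    obtain ⟨h1, h2⟩ := he
    rw [cutF, mem_eb] at h1 h2
    obtain ⟨hE, u, v, rfl, hu, hv⟩ := h1
    obtain ⟨_, u', v', heq, hu', hv'⟩ := h2
    rw [Sym2.eq_iff] at heq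
    rcases heq with ⟨rfl, rfl⟩ | ⟨rfl, rfl⟩
    · rw [Set.mem_compl_iff, Set.mem_union, not_or] at hu'
      exact ⟨(mem_eb).mpr ⟨hE, u, v, rfl, hu'.1, hv.1⟩,
             (mem_eb).mpr ⟨hE, u, v, rfl, hu'.2, hv.2⟩⟩
    · exact absurd (Or.inl hv.1) hu'
  calc (cutF C (S ∩ T)).card + (cutF C (S ∪ T)).card
      = (cutF C (S ∩ T) ∪ cutF C (S ∪ T)).card + (cutF C (S ∩ T) ∩ cutF C (S ∪ T)).card := by
        rw [Finset.card_union_add_card_inter]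
    _ ≤ (cutF C S ∪ cutF C T).card + (cutF C S ∩ cutF C T).card :=
        Nat.add_le_add (Finset.card_le_card hsub1) (Finset.card_le_card hsub2)
    _ = (cutF C S).card + (cutF C T).card := Finset.card_union_add_card_inter _ _

/-- if two disjoint sets have no edges between them, cuts add -/
lemma cutF_add_of_no_edges {S1 S2 : Set X} (h12 : Disjoint S1 S2)
    (hno : (eb C S1 S2).card = 0) :
    (cutF C (S1 ∪ S2)).card = (cutF C S1).card + (cutF C S2).card := by
  set W : Set X := (S1 ∪ S2)ᶜ with hW
  have hWd1 : Disjoint W S1 := by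
    rw [Set.disjoint_left]; intro x hx h; exact hx (Or.inl h)
  have hWd2 : Disjoint W S2 := by
    rw [Set.disjoint_left]; intro x hx h; exact hx (Or.inr h)
  have e1 : (cutF C (S1 ∪ S2)).card = (eb C W S1).card + (eb C W S2).card := by
    rw [cutF, ← hW]
    exact eb_card_union_right (by rw [hW]; exact disjoint_compl_left) h12
  have e2 : (cutF C S1).card = (eb C W S1).card := by
    have hS1c : S1ᶜ = W ∪ S2 := by
      ext x
      simp only [Set.mem_compl_iff, Set.mem_union, hW]
      constructor
      · intro hx
        by_cases h2 : x ∈ S2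
        · exact Or.inr h2
        · exact Or.inl (by simp [hx, h2])
      · rintro (hx | hx)
        · exact fun h => hx (Or.inl h)
        · exact fun h => h12.ne_of_mem h hx rfl
    rw [cutF, hS1c, eb_card_union_left ?_ hWd2]
    · have : (eb C S2 S1).card = 0 := by
        rw [eb_symm] at hno; exact hno
      omega
    · rw [Set.disjoint_left]
      rintro x hx (h | h)
      · exact (hWd1.ne_of_mem h hx) rfl
      · exact (h12.ne_of_mem hx h) rfl
  have e3 : (cutF C S2).card = (eb C W S2).card := by
    have hS2c : S2ᶜ = W ∪ S1 := by
      ext x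
      simp only [Set.mem_compl_iff, Set.mem_union, hW]
      constructor
      · intro hx
        by_cases h1 : x ∈ S1
        · exact Or.inr h1
        · exact Or.inl (by simp [hx, h1])
      · rintro (hx | hx)
        · exact fun h => hx (Or.inr h)
        · exact fun h => h12.ne_of_mem hx h rfl
    rw [cutF, hS2c, eb_card_union_left ?_ hWd1]
    · omega
    · rw [Set.disjoint_left]
      rintro x hx (h | h)
      · exact (hWd2.ne_of_mem h hx) rfl
      · exact (h12.ne_of_mem h hx) rfl
  omega

/-- THE CORE LEMMA: three cut-2 sets cannot have the alternating pattern -/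
lemma core (hconn : C.Connected) (hdeg : ∀ v : X, (C.neighborSet v).ncard = 2)
    {I1 I2 I3 : Set X}
    (h1 : (cutF C I1).card = 2) (h2 : (cutF C I2).card = 2) (h3 : (cutF C I3).card = 2)
    {p q r x : X}
    (hp1 : p ∈ I1) (hp2 : p ∈ I2) (hp3 : p ∈ I3)
    (hq1 : q ∉ I1) (hq2 : q ∉ I2) (hq3 : q ∈ I3)
    (hr1 : r ∉ I1) (hr2 : r ∈ I2) (hr3 : r ∉ I3)
    (hx1 : x ∈ I1) (hx2 : x ∉ I2) (hx3 : x ∉ I3) : False := by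
  set P : Set X := I2 ∩ I3 with hP
  set Q : Set X := I3 \ I2 with hQ
  set R : Set X := I2 \ I3 with hR
  set Z : Set X := (I2 ∪ I3)ᶜ with hZ
  have hpP : p ∈ P := ⟨hp2, hp3⟩
  have hqQ : q ∈ Q := ⟨hq3, hq2⟩
  have hrR : r ∈ R := ⟨hr2, hr3⟩
  have hxZ : x ∈ Z := by rw [hZ]; intro h; rcases h with h | h; exact hx2 h; exact hx3 h
  set a := (eb C P Q).card with ha
  set b := (eb C P R).card with hb
  set c := (eb C P Z).card with hc
  set d := (eb C Q R).card with hd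
  set f := (eb C Q Z).card with hf
  set g := (eb C R Z).card with hg
  -- disjointness facts
  have dPQ : Disjoint P Q := by rw [Set.disjoint_left]; rintro y ⟨h1, _⟩ ⟨_, h2⟩; exact h2 h1
  have dPR : Disjoint P R := by rw [Set.disjoint_left]; rintro y ⟨_, h1⟩ ⟨_, h2⟩; exact h2 h1
  have dPZ : Disjoint P Z := by rw [Set.disjoint_left]; rintro y ⟨h1, _⟩ h2; exact h2 (Or.inl h1)
  have dQR : Disjoint Q R := by rw [Set.disjoint_left]; rintro y ⟨_, h1⟩ ⟨h2, _⟩; exact h1 h2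
  have dQZ : Disjoint Q Z := by rw [Set.disjoint_left]; rintro y ⟨h1, _⟩ h2; exact h2 (Or.inr h1)
  have dRZ : Disjoint R Z := by rw [Set.disjoint_left]; rintro y ⟨h1, _⟩ h2; exact h2 (Or.inl h1)
  -- partition facts
  have hI2 : I2 = P ∪ R := by
    ext y; simp only [hP, hR, Set.mem_union, Set.mem_inter_iff, Set.mem_diff]; tauto
  have hI2c : I2ᶜ = Q ∪ Z := by
    ext y; simp only [hP, hQ, hZ, Set.mem_compl_iff, Set.mem_union, Set.mem_diff]; tauto
  have hI3 : I3 = P ∪ Q := by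
    ext y; simp only [hP, hQ, Set.mem_union, Set.mem_inter_iff, Set.mem_diff]; tauto
  have hI3c : I3ᶜ = R ∪ Z := by
    ext y; simp only [hR, hZ, Set.mem_compl_iff, Set.mem_union, Set.mem_diff]; tauto
  have hPc : Pᶜ = Q ∪ (R ∪ Z) := by
    ext y; simp only [hP, hQ, hR, hZ, Set.mem_compl_iff, Set.mem_union, Set.mem_diff,
      Set.mem_inter_iff]; tauto
  have hZc : Zᶜ = P ∪ (Q ∪ R) := by
    ext y; simp only [hP, hQ, hR, hZ, Set.mem_compl_iff, Set.mem_union, Set.mem_diff,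
      Set.mem_inter_iff, compl_compl]; tauto
  -- decomposition of cut I2 : 2 = a + d + c + g
  have hcut2 : 2 = a + d + (c + g) := by
    rw [← h2, cutF, hI2c, hI2]
    rw [eb_card_union_left (by rw [← hI2, ← hI2c]; exact disjoint_compl_right) dQZ,
      eb_card_union_right (Set.disjoint_union_right.mpr ⟨dPQ.symm, dQR⟩) dPR,
      eb_card_union_right (Set.disjoint_union_right.mpr ⟨dPZ.symm, dRZ.symm⟩) dPR,
      eb_symm Q P, eb_symm Z P, eb_symm Z R, ← ha, ← hd, ← hc, ← hg]
  have hcut3 : 2 = b + d + (c + f) := by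
    rw [← h3, cutF, hI3c, hI3]
    rw [eb_card_union_left (by rw [← hI3, ← hI3c]; exact disjoint_compl_right) dRZ,
      eb_card_union_right (Set.disjoint_union_right.mpr ⟨dPR.symm, dQR.symm⟩) dPQ,
      eb_card_union_right (Set.disjoint_union_right.mpr ⟨dPZ.symm, dQZ.symm⟩) dPQ,
      eb_symm R P, eb_symm R Q, eb_symm Z P, eb_symm Z Q, ← hb, ← hd, ← hc, ← hf]
  have hcutP : (cutF C P).card = a + (b + c) := by
    rw [cutF, hPc]
    rw [eb_card_union_left (by rw [← hPc]; exact disjoint_compl_right)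
        (Set.disjoint_union_right.mpr ⟨dQR, dQZ⟩),
      eb_card_union_left (Set.disjoint_union_right.mpr ⟨dPR, dPZ⟩) dRZ,
      eb_symm Q P, eb_symm R P, eb_symm Z P, ← ha, ← hb, ← hc]
  have hcutZ : (cutF C Z).card = c + (f + g) := by
    rw [cutF, hZc]
    rw [eb_card_union_left (by rw [← hZc]; exact disjoint_compl_right)
        (Set.disjoint_union_right.mpr ⟨dPQ, dPR⟩),
      eb_card_union_left (Set.disjoint_union_right.mpr ⟨dQZ.symm, dRZ.symm⟩) dQR,
      ← hc, ← hf, ← hg]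
  have hPge : 2 ≤ (cutF C P).card :=
    two_le_cutF hconn hdeg ⟨p, hpP⟩ ⟨q, by rw [hPc]; exact Or.inl hqQ⟩
  have hZge : 2 ≤ (cutF C Z).card :=
    two_le_cutF hconn hdeg ⟨x, hxZ⟩ ⟨p, by rw [hZc]; exact Or.inl hpP⟩
  have hd0 : d = 0 := by omega
  have hcP2 : (cutF C P).card = 2 := by omega
  have hcZ2 : (cutF C Z).card = 2 := by omega
  -- Step 2: V := (I1 ∪ P) ∪ Z is a cut-2 set
  have hIP : 2 ≤ (cutF C (I1 ∩ P)).card :=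
    two_le_cutF hconn hdeg ⟨p, hp1, hpP⟩ ⟨q, fun h => hq1 h.1⟩
  have hsub1 := cutF_submod (C := C) I1 P
  have hIPu : 2 ≤ (cutF C (I1 ∪ P)).card :=
    two_le_cutF hconn hdeg ⟨p, Or.inl hp1⟩
      ⟨q, fun h => h.elim hq1 (fun h' => dPQ.ne_of_mem h' hqQ rfl)⟩
  have hVp : 2 ≤ (cutF C ((I1 ∪ P) ∩ Z)).card :=
    two_le_cutF hconn hdeg ⟨x, Or.inl hx1, hxZ⟩ ⟨q, fun h => dQZ.ne_of_mem hqQ h.2 rfl⟩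
  have hsub2 := cutF_submod (C := C) (I1 ∪ P) Z
  have hVge : 2 ≤ (cutF C (I1 ∪ P ∪ Z)).card :=
    two_le_cutF hconn hdeg ⟨p, Or.inl (Or.inl hp1)⟩
      ⟨q, fun h => h.elim (fun h' => h'.elim hq1 (fun h'' => dPQ.ne_of_mem h'' hqQ rfl))
        (fun h' => dQZ.ne_of_mem hqQ h' rfl)⟩
  have hV2 : (cutF C (I1 ∪ P ∪ Z)).card = 2 := by omega
  -- Step 3: contradiction via the complement of V
  set V : Set X := I1 ∪ P ∪ Z with hV
  have hVcQ : q ∈ Vᶜ ∩ Q := by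
    refine ⟨fun h => ?_, hqQ⟩
    rcases h with (h | h) | h
    · exact hq1 h
    · exact dPQ.ne_of_mem h hqQ rfl
    · exact dQZ.ne_of_mem hqQ h rfl
  have hVcR : r ∈ Vᶜ ∩ R := by
    refine ⟨fun h => ?_, hrR⟩
    rcases h with (h | h) | h
    · exact hr1 h
    · exact dPR.ne_of_mem h hrR rfl
    · exact dRZ.ne_of_mem hrR h rfl
  have hVc : Vᶜ = (Vᶜ ∩ Q) ∪ (Vᶜ ∩ R) := by
    ext y
    simp only [Set.mem_union, Set.mem_inter_iff]
    constructor
    · intro hy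
      have hyQ : y ∈ Q ∪ R := by
        by_contra hcon
        rw [Set.mem_union] at hcon
        push_neg at hcon
        apply hy
        rw [hV]
        by_cases hy2 : y ∈ I2
        · by_cases hy3 : y ∈ I3
          · exact Or.inl (Or.inr ⟨hy2, hy3⟩)
          · exact absurd ⟨hy2, hy3⟩ hcon.2
        · by_cases hy3 : y ∈ I3
          · exact absurd ⟨hy3, hy2⟩ hcon.1
          · exact Or.inr (fun h => h.elim hy2 hy3)
      rcases hyQ with h | h
      · exact Or.inl ⟨hy, h⟩
      · exact Or.inr ⟨hy, h⟩
    · rintro (⟨h, _⟩ | ⟨h, _⟩) <;> exact h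
  have hnoedge : (eb C (Vᶜ ∩ Q) (Vᶜ ∩ R)).card = 0 := by
    rw [← Nat.le_zero, ← hd0, hd]
    exact Finset.card_le_card (eb_mono Set.inter_subset_right Set.inter_subset_right)
  have hadd : (cutF C ((Vᶜ ∩ Q) ∪ (Vᶜ ∩ R))).card
      = (cutF C (Vᶜ ∩ Q)).card + (cutF C (Vᶜ ∩ R)).card :=
    cutF_add_of_no_edges (dQR.mono Set.inter_subset_right Set.inter_subset_right) hnoedge
  have hQge : 2 ≤ (cutF C (Vᶜ ∩ Q)).card :=
    two_le_cutF hconn hdeg ⟨q, hVcQ⟩ ⟨p, fun h => dPQ.ne_of_mem hpP h.2 rfl⟩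
  have hRge : 2 ≤ (cutF C (Vᶜ ∩ R)).card :=
    two_le_cutF hconn hdeg ⟨r, hVcR⟩ ⟨p, fun h => dPR.ne_of_mem hpP h.2 rfl⟩
  have hfin : (cutF C Vᶜ).card = 2 := by rw [cutF_compl]; exact hV2
  rw [hVc] at hfin
  omega

def IsArc (C : SimpleGraph X) (I : Set X) : Prop :=
  I.Nonempty ∧ Iᶜ.Nonempty ∧ (cutF C I).card = 2

lemma IsArc.compl {I : Set X} (h : IsArc C I) : IsArc C Iᶜ :=
  ⟨h.2.1, by rw [compl_compl]; exact h.1, by rw [cutF_compl]; exact h.2.2⟩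

lemma mem_cutF_of {I : Set X} {u v : X} (hadj : C.Adj u v) (hu : u ∈ I) (hv : v ∉ I) :
    s(u, v) ∈ cutF C I :=
  mem_eb.mpr ⟨(SimpleGraph.mem_edgeSet C).mpr hadj, v, u, Sym2.eq_swap, hv, hu⟩

/-- deleting all cut edges of `I` makes reachability preserve membership in `I` -/
lemma reach_mem_iff {I : Set X} {Del : Set (Sym2 X)} (h : ∀ e ∈ cutF C I, e ∈ Del)
    {u v : X} (huv : (C.deleteEdges Del).Reachable u v) : u ∈ I ↔ v ∈ I := by
  obtain ⟨w⟩ := huv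
  induction w with
  | nil => rfl
  | @cons x y z hadj p ih =>
    rw [SimpleGraph.deleteEdges_adj] at hadj
    refine (Iff.intro (fun hx => ?_) (fun hy => ?_)).trans ih
    · by_contra hy
      exact hadj.2 (h _ (mem_cutF_of hadj.1 hx hy))
    · by_contra hx
      exact hadj.2 (by rw [Sym2.eq_swap]; exact h _ (mem_cutF_of hadj.1.symm hy hx))

/-- cut edges of a component support of a deleted graph are among the deleted edges -/
lemma cut_supp_subset {Del : Set (Sym2 X)} (k : (C.deleteEdges Del).ConnectedComponent)
    {e : Sym2 X} (he : e ∈ cutF C k.supp) : e ∈ Del := by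
  rw [cutF, mem_eb] at he
  obtain ⟨hE, u, v, rfl, hu, hv⟩ := he
  by_contra hne
  have hadj : (C.deleteEdges Del).Adj v u := by
    rw [SimpleGraph.deleteEdges_adj]
    refine ⟨((SimpleGraph.mem_edgeSet C).mp hE).symm, fun h => hne (by rwa [Sym2.eq_swap] at h)⟩
  rw [SimpleGraph.ConnectedComponent.mem_supp_iff] at hv
  exact hu (by
    rw [Set.mem_compl_iff] at hu
    rw [SimpleGraph.ConnectedComponent.mem_supp_iff, ← hv]
    exact SimpleGraph.ConnectedComponent.sound hadj.symm.reachable)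

lemma supp_disjoint {G : SimpleGraph X} {k1 k2 : G.ConnectedComponent} (h : k1 ≠ k2) :
    Disjoint k1.supp k2.supp := by
  rw [Set.disjoint_left]
  intro v h1 h2
  rw [SimpleGraph.ConnectedComponent.mem_supp_iff] at h1 h2
  exact h (h1 ▸ h2 ▸ rfl)

lemma supp_nonempty {G : SimpleGraph X} (k : G.ConnectedComponent) : k.supp.Nonempty := by
  obtain ⟨v, hv⟩ := k.exists_rep
  exact ⟨v, hv⟩

/-- display of a pair of parts, unfolded -/
def DisplaysSplitAux (C : SimpleGraph X) (A B : Set X) : Prop :=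
  ∃ e1 e2 : Sym2 X, e1 ∈ C.edgeSet ∧ e2 ∈ C.edgeSet ∧ e1 ≠ e2 ∧
    ∃ c1 c2 : (C.deleteEdges {e1, e2}).ConnectedComponent,
      c1 ≠ c2 ∧ A ⊆ c1.supp ∧ B ⊆ c2.supp

/-- (A): from a displayed split to an arc -/
lemma arc_of_displays (hconn : C.Connected) (hdeg : ∀ v : X, (C.neighborSet v).ncard = 2)
    {A B : Set X} (h : DisplaysSplitAux C A B) :
    ∃ I : Set X, IsArc C I ∧ A ⊆ I ∧ B ⊆ Iᶜ := by
  obtain ⟨e1, e2, he1, he2, hne, c1, c2, hcne, hA, hB⟩ := h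
  have hdisj := supp_disjoint hcne
  have hc2sub : c2.supp ⊆ (c1.supp)ᶜ := fun w hw hw1 => (hdisj.ne_of_mem hw1 hw) rfl
  have hCompl : (c1.supp)ᶜ.Nonempty := (supp_nonempty c2).mono hc2sub
  refine ⟨c1.supp, ⟨supp_nonempty c1, hCompl, ?_⟩, hA, fun b hb => hc2sub (hB hb)⟩
  refine le_antisymm ?_ (two_le_cutF hconn hdeg (supp_nonempty c1) hCompl)
  have hsub : cutF C c1.supp ⊆ ({e1, e2} : Finset (Sym2 X)) := by
    intro e he
    rcases cut_supp_subset c1 he with h | h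
    · rw [h]; exact Finset.mem_insert_self _ _
    · rw [Set.mem_singleton_iff] at h
      rw [h]; exact Finset.mem_insert_of_mem (Finset.mem_singleton_self _)
  calc (cutF C c1.supp).card ≤ ({e1, e2} : Finset (Sym2 X)).card := Finset.card_le_card hsub
    _ = 2 := Finset.card_pair hne

/-- (B): from an arc to a displayed split -/
lemma displays_of_arc (hconn : C.Connected) (hdeg : ∀ v : X, (C.neighborSet v).ncard = 2)
    {I A B : Set X} (hI : IsArc C I) (hA : A.Nonempty) (hB : B.Nonempty)
    (hAI : A ⊆ I) (hBI : B ⊆ Iᶜ) : DisplaysSplitAux C A B := by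
  obtain ⟨hIne, hIcne, hcard⟩ := hI
  obtain ⟨e1, e2, hne, hpair⟩ := Finset.card_eq_two.mp hcard
  have he1 : e1 ∈ cutF C I := by rw [hpair]; exact Finset.mem_insert_self _ _
  have he2 : e2 ∈ cutF C I := by
    rw [hpair]; exact Finset.mem_insert_of_mem (Finset.mem_singleton_self _)
  have he1E : e1 ∈ C.edgeSet := (mem_eb.mp he1).1
  have he2E : e2 ∈ C.edgeSet := (mem_eb.mp he2).1
  set Del : Set (Sym2 X) := {e1, e2} with hDel
  set D : SimpleGraph X := C.deleteEdges Del with hD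
  have hdel : ∀ e ∈ cutF C I, e ∈ Del := by
    intro e he
    rw [hpair] at he
    rcases Finset.mem_insert.mp he with h | h
    · exact Or.inl h
    · exact Or.inr (Finset.mem_singleton.mp h)
  have hdelc : ∀ e ∈ cutF C Iᶜ, e ∈ Del := by rw [cutF_compl]; exact hdel
  -- connectivity of cut-2 pieces within the deleted graph
  have hkey : ∀ (J : Set X), J.Nonempty → Jᶜ.Nonempty → (∀ e ∈ cutF C J, e ∈ Del) →
      ∀ u ∈ J, ∀ v ∈ J, D.Reachable u v := by
    intro J hJne hJcne hJdel u hu v hv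
    by_contra hnr
    obtain ⟨w, hw⟩ := hJcne
    set ku := D.connectedComponentMk u with hku
    set kv := D.connectedComponentMk v with hkv
    set kw := D.connectedComponentMk w with hkw
    have hsuppJ : ∀ (k : D.ConnectedComponent), ∀ z ∈ k.supp, ∀ z' ∈ k.supp,
        (z ∈ J ↔ z' ∈ J) := by
      intro k z hz z' hz'
      rw [SimpleGraph.ConnectedComponent.mem_supp_iff] at hz hz'
      exact reach_mem_iff hJdel (SimpleGraph.ConnectedComponent.exact (hz.trans hz'.symm))
    have huv : ku ≠ kv := fun h => hnr (SimpleGraph.ConnectedComponent.exact (by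
      rw [← hku, ← hkv, h]))
    have huw : ku ≠ kw := fun h => hw (by
      have h1 : u ∈ ku.supp := by
        rw [SimpleGraph.ConnectedComponent.mem_supp_iff]
      have hw' : w ∈ ku.supp := by
        rw [SimpleGraph.ConnectedComponent.mem_supp_iff, ← hkw]; exact h.symm
      exact ((hsuppJ ku u h1 w hw').mp hu))
    have hvw : kv ≠ kw := fun h => hw (by
      have h1 : v ∈ kv.supp := by
        rw [SimpleGraph.ConnectedComponent.mem_supp_iff]
      have hw' : w ∈ kv.supp := by
        rw [SimpleGraph.ConnectedComponent.mem_supp_iff, ← hkw]; exact h.symm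
      exact ((hsuppJ kv v h1 w hw').mp hv))
    -- each support has full cut {e1, e2}
    have hfull : ∀ (k : D.ConnectedComponent), k.supp ≠ Set.univ → e1 ∈ cutF C k.supp := by
      intro k hkne
      have hge : 2 ≤ (cutF C k.supp).card := by
        refine two_le_cutF hconn hdeg (supp_nonempty k) ?_
        rw [Set.nonempty_compl]
        exact hkne
      have hsub : cutF C k.supp ⊆ ({e1, e2} : Finset (Sym2 X)) := by
        intro e he
        rcases cut_supp_subset k he with h | h
        · rw [h]; exact Finset.mem_insert_self _ _
        · rw [h]; exact Finset.mem_insert_of_mem (Finset.mem_singleton_self _)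
      have : cutF C k.supp = ({e1, e2} : Finset (Sym2 X)) :=
        Finset.eq_of_subset_of_card_le hsub (by rw [Finset.card_pair hne]; exact hge)
      rw [this]; exact Finset.mem_insert_self _ _
    have hne_univ : ∀ (k k' : D.ConnectedComponent), k ≠ k' → k.supp ≠ Set.univ := by
      intro k k' hkk h
      obtain ⟨z, hz⟩ := supp_nonempty k'
      exact (supp_disjoint hkk).ne_of_mem (h ▸ Set.mem_univ z) hz rfl
    have h1 := hfull ku (hne_univ ku kv huv)
    have h2 := hfull kv (hne_univ kv ku huv.symm)
    have h3 := hfull kw (hne_univ kw ku huw.symm)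
    -- pigeonhole on the two endpoints of e1
    obtain ⟨hE, u1, v1, heq1, hu1, hv1⟩ := mem_eb.mp h1
    obtain ⟨_, u2, v2, heq2, hu2, hv2⟩ := mem_eb.mp h2
    obtain ⟨_, u3, v3, heq3, hu3, hv3⟩ := mem_eb.mp h3
    rw [heq1, Sym2.eq_iff] at heq2 heq3
    have d12 := supp_disjoint huv
    have d13 := supp_disjoint huw
    have d23 := supp_disjoint hvw
    rcases heq2 with ⟨h2a, h2b⟩ | ⟨h2a, h2b⟩
    · exact (d12.ne_of_mem hv1 (h2b ▸ hv2)) rfl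
    · rcases heq3 with ⟨h3a, h3b⟩ | ⟨h3a, h3b⟩
      · exact (d13.ne_of_mem hv1 (h3b ▸ hv3)) rfl
      · exact (d23.ne_of_mem (h2a ▸ hv2) (h3a ▸ hv3)) rfl
  obtain ⟨a, haA⟩ := hA
  obtain ⟨b, hbB⟩ := hB
  refine ⟨e1, e2, he1E, he2E, hne, D.connectedComponentMk a, D.connectedComponentMk b,
    ?_, ?_, ?_⟩
  · intro h
    have := reach_mem_iff hdel (SimpleGraph.ConnectedComponent.exact h)
    exact (hBI hbB) (this.mp (hAI haA))
  · intro a' ha'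
    rw [SimpleGraph.ConnectedComponent.mem_supp_iff]
    exact SimpleGraph.ConnectedComponent.sound (hkey I hIne hIcne hdel a' (hAI ha') a (hAI haA))
  · intro b' hb'
    rw [SimpleGraph.ConnectedComponent.mem_supp_iff]
    exact SimpleGraph.ConnectedComponent.sound
      (hkey Iᶜ hIcne (by rw [compl_compl]; exact hIne) hdelc b' (hBI hb') b (hBI hbB))

/-! ### glue: displays and rules -/

lemma displaysSplit_of_aux {A B : Set X} (h : DisplaysSplitAux C A B) :
    DisplaysSplit C s(A, B) := by
  obtain ⟨e1, e2, he1, he2, hne, c1, c2, hcne, hA, hB⟩ := h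
  exact ⟨A, B, rfl, e1, e2, he1, he2, hne, c1, c2, hcne, hA, hB⟩

lemma arc_of_displaysSplit (hconn : C.Connected) (hdeg : ∀ v : X, (C.neighborSet v).ncard = 2)
    {A B : Set X} (h : DisplaysSplit C s(A, B)) :
    ∃ I : Set X, IsArc C I ∧ A ⊆ I ∧ B ⊆ Iᶜ := by
  obtain ⟨A', B', heq, haux⟩ := h
  rw [Sym2.eq_iff] at heq
  rcases heq with ⟨rfl, rfl⟩ | ⟨rfl, rfl⟩
  · exact arc_of_displays hconn hdeg haux
  · obtain ⟨I, hI, hB, hA⟩ := arc_of_displays hconn hdeg haux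
    exact ⟨Iᶜ, hI.compl, hA, by rw [compl_compl]; exact hB⟩

lemma displaysSplit_of_arc (hconn : C.Connected) (hdeg : ∀ v : X, (C.neighborSet v).ncard = 2)
    {I A B : Set X} (hI : IsArc C I) (hA : A.Nonempty) (hB : B.Nonempty)
    (hAI : A ⊆ I) (hBI : B ⊆ Iᶜ) : DisplaysSplit C s(A, B) :=
  displaysSplit_of_aux (displays_of_arc hconn hdeg hI hA hB hAI hBI)

lemma displays_mOut (hconn : C.Connected) (hdeg : ∀ v : X, (C.neighborSet v).ncard = 2)
    {A1 B1 A2 B2 : Set X}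
    (h1 : DisplaysSplit C s(A1, B1)) (h2 : DisplaysSplit C s(A2, B2))
    (hm : mCond A1 B1 A2 B2) : ∀ S ∈ mOut A1 B1 A2 B2, DisplaysSplit C S := by
  obtain ⟨I1, hI1, hA1, hB1⟩ := arc_of_displaysSplit hconn hdeg h1
  obtain ⟨I2, hI2, hA2, hB2⟩ := arc_of_displaysSplit hconn hdeg h2
  obtain ⟨hm1, hm2⟩ := hm
  have hint : (I1 ∩ I2).Nonempty := hm1.mono (Set.inter_subset_inter hA1 hA2)
  have hcc : (I1ᶜ ∩ I2ᶜ).Nonempty := hm2.mono (Set.inter_subset_inter hB1 hB2)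
  obtain ⟨z, hz⟩ := hcc
  have hsubm := cutF_submod (C := C) I1 I2
  have hge1 : 2 ≤ (cutF C (I1 ∩ I2)).card :=
    two_le_cutF hconn hdeg hint ⟨z, fun h => hz.1 h.1⟩
  have hge2 : 2 ≤ (cutF C (I1 ∪ I2)).card :=
    two_le_cutF hconn hdeg (hI1.1.mono Set.subset_union_left)
      ⟨z, fun h => h.elim (fun h' => hz.1 h') (fun h' => hz.2 h')⟩
  have harc1 : IsArc C (I1 ∩ I2) :=
    ⟨hint, ⟨z, fun h => hz.1 h.1⟩, by have := hI1.2.2; have := hI2.2.2; omega⟩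
  have harc2 : IsArc C (I1 ∪ I2) :=
    ⟨hI1.1.mono Set.subset_union_left,
      ⟨z, fun h => h.elim (fun h' => hz.1 h') (fun h' => hz.2 h')⟩,
      by have := hI1.2.2; have := hI2.2.2; omega⟩
  intro S hS
  simp only [mOut, Set.mem_insert_iff, Set.mem_singleton_iff] at hS
  rcases hS with rfl | rfl | rfl | rfl
  · exact h1
  · exact h2
  · refine displaysSplit_of_arc hconn hdeg harc1 hm1 (hm2.mono fun x hx => Or.inl hx.1)
      (Set.inter_subset_inter hA1 hA2) ?_
    rintro x (hx | hx) hmem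
    · exact hB1 hx hmem.1
    · exact hB2 hx hmem.2
  · refine displaysSplit_of_arc hconn hdeg harc2.compl hm2
      (hm1.mono fun x hx => Or.inl hx.1) ?_ ?_
    · intro x hx h
      exact h.elim (fun h' => hB1 hx.1 h') (fun h' => hB2 hx.2 h')
    · intro x hx
      rw [compl_compl]
      exact hx.elim (fun h => Or.inl (hA1 h)) (fun h => Or.inr (hA2 h))

lemma displays_yOut (hconn : C.Connected) (hdeg : ∀ v : X, (C.neighborSet v).ncard = 2)
    {A1 B1 A2 B2 A3 B3 : Set X}
    (h1 : DisplaysSplit C s(A1, B1)) (h2 : DisplaysSplit C s(A2, B2))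
    (h3 : DisplaysSplit C s(A3, B3))
    (hy : yCond A1 B1 A2 B2 A3 B3) : ∀ S ∈ yOut A1 B1 A2 B2 A3 B3, DisplaysSplit C S := by
  obtain ⟨I1, hI1, hA1, hB1⟩ := arc_of_displaysSplit hconn hdeg h1
  obtain ⟨I2, hI2, hA2, hB2⟩ := arc_of_displaysSplit hconn hdeg h2
  obtain ⟨I3, hI3, hA3, hB3⟩ := arc_of_displaysSplit hconn hdeg h3
  obtain ⟨⟨p, hp⟩, ⟨q, hq⟩, ⟨r, hr⟩, hempty⟩ := hy
  have claim : ∀ x, x ∈ I1 → x ∈ I2 ∨ x ∈ I3 := by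
    intro x hx
    by_contra hcon
    push_neg at hcon
    exact core hconn hdeg hI1.2.2 hI2.2.2 hI3.2.2
      (hA1 hp.1.1) (hA2 hp.1.2) (hA3 hp.2)
      (hB1 hq.1.1) (hB2 hq.1.2) (hA3 hq.2)
      (hB1 hr.1.1) (hA2 hr.1.2) (hB3 hr.2)
      hx hcon.1 hcon.2
  intro S hS
  simp only [yOut, Set.mem_insert_iff, Set.mem_singleton_iff] at hS
  rcases hS with rfl | rfl | rfl
  · refine displaysSplit_of_arc hconn hdeg hI1.compl ⟨q, Or.inl hq.1.1⟩ ⟨p, hp.1.1⟩ ?_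
      (by rw [compl_compl]; exact hA1)
    rintro x (hx | hx)
    · exact hB1 hx
    · intro hmem
      rcases claim x hmem with h | h
      · exact hB2 hx.1 h
      · exact hB3 hx.2 h
  · refine displaysSplit_of_arc hconn hdeg hI2 ⟨p, Or.inl hp.1.2⟩ ⟨q, hq.1.2⟩ ?_ hB2
    rintro x (hx | hx)
    · exact hA2 hx
    · rcases claim x (hA1 hx.1) with h | h
      · exact h
      · exact absurd h (hB3 hx.2)
  · refine displaysSplit_of_arc hconn hdeg hI3 ⟨p, Or.inl hp.2⟩ ⟨r, hr.2⟩ ?_ hB3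
    rintro x (hx | hx)
    · exact hA3 hx
    · rcases claim x (hA1 hx.1) with h | h
      · exact absurd h (hB2 hx.2)
      · exact h

lemma wc_of_displays (hconn : C.Connected) (hdeg : ∀ v : X, (C.neighborSet v).ncard = 2)
    {Sig : Set (Sym2 (Set X))} (h : DisplaysColl C Sig) : WeaklyCompatible Sig := by
  intro S1 hS1 S2 hS2 S3 hS3 A1 B1 A2 B2 A3 B3 he1 he2 he3
  by_contra hcon
  push_neg at hcon
  obtain ⟨hn1, hn2, hn3, hn4⟩ := hcon
  obtain ⟨p, hp⟩ := hn1
  obtain ⟨q, hq⟩ := hn2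
  obtain ⟨r, hr⟩ := hn3
  obtain ⟨x, hx⟩ := hn4
  have hd1 := h S1 hS1; rw [he1] at hd1
  have hd2 := h S2 hS2; rw [he2] at hd2
  have hd3 := h S3 hS3; rw [he3] at hd3
  obtain ⟨I1, hI1, hA1, hB1⟩ := arc_of_displaysSplit hconn hdeg hd1
  obtain ⟨I2, hI2, hA2, hB2⟩ := arc_of_displaysSplit hconn hdeg hd2
  obtain ⟨I3, hI3, hA3, hB3⟩ := arc_of_displaysSplit hconn hdeg hd3
  exact core hconn hdeg hI1.2.2 hI2.2.2 hI3.2.2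
    (hA1 hp.1.1) (hA2 hp.1.2) (hA3 hp.2)
    (hB1 hq.1.1) (hB2 hq.1.2) (hA3 hq.2)
    (hB1 hr.1.1) (hA2 hr.1.2) (hB3 hr.2)
    (hA1 hx.1.1) (hB2 hx.1.2) (hB3 hx.2)

/-! ### glue: extension and closure sequences -/

lemma splitExtends_refl (S : Sym2 (Set X)) : SplitExtends S S := by
  induction S using Sym2.inductionOn with
  | hf A B => exact ⟨A, B, A, B, rfl, rfl, le_refl _, le_refl _⟩

lemma splitExtends_trans {S T U : Sym2 (Set X)} (h1 : SplitExtends U T)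
    (h2 : SplitExtends T S) : SplitExtends U S := by
  obtain ⟨A, B, C', D', hU, hT, hCA, hDB⟩ := h1
  obtain ⟨A2, B2, C2, D2, hT2, hS, hCA2, hDB2⟩ := h2
  rw [hT] at hT2
  rw [Sym2.eq_iff] at hT2
  rcases hT2 with ⟨rfl, rfl⟩ | ⟨rfl, rfl⟩
  · exact ⟨A, B, C2, D2, hU, hS, fun x hx => hCA (hCA2 hx), fun x hx => hDB (hDB2 hx)⟩
  · exact ⟨B, A, C2, D2, hU.trans Sym2.eq_swap, hS,
      fun x hx => hDB (hCA2 hx), fun x hx => hCA (hDB2 hx)⟩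

lemma preceq_refl {Sig : Set (Sym2 (Set X))} : Preceq Sig Sig :=
  fun S hS => ⟨S, hS, splitExtends_refl S⟩

lemma preceq_trans {S1 S2 S3 : Set (Sym2 (Set X))} (h1 : Preceq S1 S2) (h2 : Preceq S2 S3) :
    Preceq S1 S3 := by
  intro S hS
  obtain ⟨T, hT, hTS⟩ := h1 S hS
  obtain ⟨U, hU, hUT⟩ := h2 T hT
  exact ⟨U, hU, splitExtends_trans hUT hTS⟩

lemma displaysSplit_of_extends {S T : Sym2 (Set X)} (h : SplitExtends T S)
    (hT : DisplaysSplit C T) : DisplaysSplit C S := by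
  obtain ⟨A, B, C', D', hTeq, hSeq, hCA, hDB⟩ := h
  obtain ⟨A', B', heq, e1, e2, he1, he2, hne, c1, c2, hcne, hA', hB'⟩ := hT
  rw [hTeq, Sym2.eq_iff] at heq
  rcases heq with ⟨rfl, rfl⟩ | ⟨rfl, rfl⟩
  · exact ⟨C', D', hSeq, e1, e2, he1, he2, hne, c1, c2, hcne,
      fun x hx => hA' (hCA hx), fun x hx => hB' (hDB hx)⟩
  · exact ⟨C', D', hSeq, e1, e2, he1, he2, hne, c2, c1, hcne.symm,
      fun x hx => hB' (hCA hx), fun x hx => hA' (hDB hx)⟩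

lemma preceq_displays {Sig Sig' : Set (Sym2 (Set X))} (h : Preceq Sig Sig')
    (hd : DisplaysColl C Sig') : DisplaysColl C Sig := by
  intro S hS
  obtain ⟨T, hT, hTS⟩ := h S hS
  exact displaysSplit_of_extends hTS (hd T hT)

lemma mStep_displays (hconn : C.Connected) (hdeg : ∀ v : X, (C.neighborSet v).ncard = 2)
    {Sg Sg' : Set (Sym2 (Set X))} (hd : DisplaysColl C Sg) (h : mStepNT Sg Sg') :
    DisplaysColl C Sg' := by
  obtain ⟨A1, B1, A2, B2, hm1, hm2, hne, hcond, hnt, heq⟩ := h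
  subst heq
  intro S hS
  rcases hS.1 with hS' | hS'
  · exact hd S hS'
  · exact displays_mOut hconn hdeg (hd _ hm1) (hd _ hm2) hcond S hS'

lemma yStep_displays (hconn : C.Connected) (hdeg : ∀ v : X, (C.neighborSet v).ncard = 2)
    {Sg Sg' : Set (Sym2 (Set X))} (hd : DisplaysColl C Sg) (h : yStepNT Sg Sg') :
    DisplaysColl C Sg' := by
  obtain ⟨A1, B1, A2, B2, A3, B3, hm1, hm2, hm3, hne12, hne13, hne23, hcond, hnt, heq⟩ := h
  subst heq
  intro S hS
  rcases hS.1 with hS' | hS'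
  · exact hd S hS'
  · exact displays_yOut hconn hdeg (hd _ hm1) (hd _ hm2) (hd _ hm3) hcond S hS'

lemma closure_displays {P : Set (Sym2 (Set X)) → Prop}
    {stepNT : Set (Sym2 (Set X)) → Set (Sym2 (Set X)) → Prop}
    {closed : Set (Sym2 (Set X)) → Prop}
    (hstep : ∀ Sg Sg', DisplaysColl C Sg → stepNT Sg Sg' → DisplaysColl C Sg')
    (hP : ∀ Sg : Set (Sym2 (Set X)), DisplaysColl C Sg → P Sg)
    {Sig : Set (Sym2 (Set X))} {cl : Option (Set (Sym2 (Set X)))}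
    (hcl : IsSplitClosure P stepNT closed Sig cl)
    (hd : DisplaysColl C Sig) : OptionDisplays C cl := by
  obtain ⟨n, f, hseq, hbr⟩ := hcl
  have hall : ∀ k, k ≤ n → DisplaysColl C (f k) := by
    intro k
    induction k with
    | zero => intro _; rw [hseq.1]; exact hd
    | succ k ih =>
      intro hk
      exact hstep _ _ (ih (by omega)) (hseq.2.2 k (by omega)).2.1
  have hfn : DisplaysColl C (f n) := hall n le_rfl
  rcases hbr with ⟨_, _, hcl'⟩ | ⟨hnp, _⟩
  · exact ⟨f n, hcl', hfn⟩
  · exact absurd (hP _ hfn) hnp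

lemma closure_displays_rev {P : Set (Sym2 (Set X)) → Prop}
    {stepNT : Set (Sym2 (Set X)) → Set (Sym2 (Set X)) → Prop}
    {closed : Set (Sym2 (Set X)) → Prop}
    {Sig : Set (Sym2 (Set X))} {cl : Option (Set (Sym2 (Set X)))}
    (hcl : IsSplitClosure P stepNT closed Sig cl)
    (hod : OptionDisplays C cl) : DisplaysColl C Sig := by
  obtain ⟨Sig'', heq, hdisp⟩ := hod
  obtain ⟨n, f, hseq, hbr⟩ := hcl
  have hfn : DisplaysColl C (f n) := by
    rcases hbr with ⟨_, _, h⟩ | ⟨_, h⟩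
    · rw [h] at heq
      rw [Option.some.injEq] at heq
      rw [heq]
      exact hdisp
    · rw [h] at heq
      simp at heq
  have hpre : ∀ k, k ≤ n → Preceq Sig (f k) := by
    intro k
    induction k with
    | zero => intro _; rw [hseq.1]; exact preceq_refl
    | succ k ih =>
      intro hk
      exact preceq_trans (ih (by omega)) (hseq.2.2 k (by omega)).2.2.1
  exact preceq_displays (hpre n le_rfl) hfn

end Statement15Aux


/-- for `Σ ∈ P(X)` and an `X`-cycle `C`, `Σ` is displayed by `C` iff the
split closure `⟨Σ⟩_{M/Y}` is displayed by `C`; in that case the split closures `⟨Σ⟩_Y`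
and `⟨Σ⟩_M` are also displayed by `C`. -/
theorem statement15 {X : Type*} [Fintype X] (Sig : Set (Sym2 (Set X))) (C : SimpleGraph X)
    (hPX : InPX Sig) (hC : IsXCycle C)
    (clMY clY clM : Option (Set (Sym2 (Set X))))
    (hMY : IsMYClosure Sig clMY) (hY : IsYClosure Sig clY) (hM : IsMClosure Sig clM) :
    (DisplaysColl C Sig ↔ OptionDisplays C clMY) ∧
    (DisplaysColl C Sig → OptionDisplays C clY ∧ OptionDisplays C clM) := by
  classical
  have hconn : C.Connected := hC.1
  have hdeg : ∀ v : X, (C.neighborSet v).ncard = 2 := hC.2.2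
  have hstepMY : ∀ Sg Sg' : Set (Sym2 (Set X)), DisplaysColl C Sg →
      (mStepNT Sg Sg' ∨ yStepNT Sg Sg') → DisplaysColl C Sg' := by
    intro Sg Sg' hd h
    rcases h with h | h
    · exact Statement15Aux.mStep_displays hconn hdeg hd h
    · exact Statement15Aux.yStep_displays hconn hdeg hd h
  refine ⟨⟨fun hd => Statement15Aux.closure_displays hstepMY
      (fun Sg h => Statement15Aux.wc_of_displays hconn hdeg h) hMY hd,
      fun hod => Statement15Aux.closure_displays_rev hMY hod⟩,
    fun hd => ⟨Statement15Aux.closure_displays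
        (fun Sg Sg' h hs => Statement15Aux.yStep_displays hconn hdeg h hs)
        (fun Sg h => Statement15Aux.wc_of_displays hconn hdeg h) hY hd,
      Statement15Aux.closure_displays
        (fun Sg Sg' h hs => Statement15Aux.mStep_displays hconn hdeg h hs)
        (fun _ _ => trivial) hM hd⟩⟩
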